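/- Let k ≥ 2 be an even integer and let D be a k-quasi-transitive digraph. If P = (u_0, u_1, …, u_{k+1}, u_{k+2}) is a directed path in D of minimum length from u_0 to u_{k+2}, i.e., d(u_0,u_{k+2}) = k+2, then (u_{k+2}, u_{k−i}) ∈ A(D) for every i with 0 ≤ i ≤ k. -/

import Mathlib

variable {V : Type*}

/-- A directed path of length `n` from `u` to `v` in the digraph with arc relation `A`:
a sequence of `n + 1` pairwise distinct vertices, consecutive ones joined by arcs. -/
def HasPathN (A : V → V → Prop) (u v : V) (n : ℕ) : Prop :=
  ∃ f : Fin (n + 1) → V, Function.Injective f ∧ f 0 = u ∧ f (Fin.last n) = v ∧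
    ∀ i : Fin n, A (f i.castSucc) (f i.succ)

/-- The distance from `u` to `v`: the length of a shortest directed path from `u` to `v`,
`⊤` if there is no such path. -/
noncomputable def ddist (A : V → V → Prop) (u v : V) : ℕ∞ :=
  sInf {n : ℕ∞ | ∃ m : ℕ, n = (m : ℕ∞) ∧ HasPathN A u v m}

/-- `D` is `k`-quasi-transitive if for every directed path `(v_0, …, v_k)` of length `k`,
either `(v_0, v_k)` or `(v_k, v_0)` is an arc. -/
def KQuasiTrans (A : V → V → Prop) (k : ℕ) : Prop :=
  ∀ u v : V, HasPathN A u v k → A u v ∨ A v u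

/-- A vertex `v` is an `r`-king if every vertex is within distance `r` from `v`. -/
def IsRKing (A : V → V → Prop) (r : ℕ) (v : V) : Prop :=
  ∀ u : V, ddist A v u ≤ (r : ℕ∞)

/-- `u` reaches `v` by a directed path. -/
def Reaches (A : V → V → Prop) (u v : V) : Prop :=
  ∃ n : ℕ, HasPathN A u v n

/-- A strong component: the set of all vertices mutually reachable with some vertex. -/
def IsStrongComponent (A : V → V → Prop) (S : Set V) : Prop :=
  ∃ v : V, S = {u | Reaches A u v ∧ Reaches A v u}

/-- An initial strong component: a strong component receiving no arcs from outside. -/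
def IsInitialStrongComponent (A : V → V → Prop) (S : Set V) : Prop :=
  IsStrongComponent A S ∧ ∀ u v : V, u ∉ S → v ∈ S → ¬ A u v

/-- The out-degree of `v` in `D`. -/
noncomputable def outDeg (A : V → V → Prop) (v : V) : ℕ :=
  {u : V | A v u}.ncard

/-- The out-degree of `v` in the subdigraph of `D` induced by `C`. -/
noncomputable def outDegIn (A : V → V → Prop) (C : Set V) (v : V) : ℕ :=
  {u ∈ C | A v u}.ncard

/-- The maximum out-degree of the subdigraph induced by `C`. -/
noncomputable def maxOutDegIn (A : V → V → Prop) (C : Set V) : ℕ :=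
  sSup (outDegIn A C '' C)

/-- even `k ≥ 2`; if `(u_0, …, u_{k+2})` is a shortest path (so
`d(u_0, u_{k+2}) = k+2`), then `u_{k+2} → u_{k−i}` for every `0 ≤ i ≤ k`. -/
lemma hasPathN_mk (A : V → V → Prop) (m : ℕ) (w : ℕ → V)
    (hw : ∀ i ≤ m, ∀ j ≤ m, w i = w j → i = j)
    (ha : ∀ i < m, A (w i) (w (i+1))) :
    HasPathN A (w 0) (w m) m := by
  refine ⟨fun i => w i.val,
    fun i j h => Fin.ext (hw i.val (Nat.lt_succ_iff.mp i.isLt) j.val (Nat.lt_succ_iff.mp j.isLt) h),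
    by simp, by simp, fun i => ?_⟩
  simpa using ha i.val i.isLt

lemma ddist_le_of_hasPathN (A : V → V → Prop) {u v : V} {m : ℕ}
    (h : HasPathN A u v m) : ddist A u v ≤ (m : ℕ∞) :=
  sInf_le ⟨m, rfl, h⟩

theorem kqt_even_last_dominates
    [Fintype V] (A : V → V → Prop) (hloop : ∀ v : V, ¬ A v v)
    (k : ℕ) (hk : 2 ≤ k) (hke : Even k) (hqt : KQuasiTrans A k)
    (f : Fin (k + 3) → V) (hinj : Function.Injective f)
    (harc : ∀ i : Fin (k + 2), A (f i.castSucc) (f i.succ))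
    (hdist : ddist A (f 0) (f (Fin.last (k + 2))) = ((k : ℕ∞) + 2)) :
    ∀ i : ℕ, ∀ _ : i ≤ k,
      A (f (Fin.last (k + 2))) (f ⟨k - i, by omega⟩) := by
  obtain ⟨c, hc⟩ := hke
  set v : ℕ → V := fun t => f ⟨min t (k+2), by omega⟩ with hvdef
  have hvmk : ∀ t (_ : t ≤ k + 2), v t = f ⟨t, by omega⟩ := by
    intro t ht
    exact congrArg f (Fin.ext (show min t (k+2) = t by omega))
  have hv0 : v 0 = f 0 := by
    rw [hvmk 0 (by omega)]
    exact congrArg f (Fin.ext (by simp))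
  have hvlast : v (k+2) = f (Fin.last (k+2)) := by
    rw [hvmk (k+2) (by omega)]
    exact congrArg f (Fin.ext (by simp))
  have hva : ∀ a, a ≤ k+2 → ∀ b, b ≤ k+2 → v a = v b → a = b := by
    intro a ha b hb h
    rw [hvmk a ha, hvmk b hb] at h
    simpa using hinj h
  have hvarc : ∀ t, t < k+2 → A (v t) (v (t+1)) := by
    intro t ht
    rw [hvmk t (by omega), hvmk (t+1) (by omega)]
    exact harc ⟨t, ht⟩
  have hpath : ∀ (m : ℕ) (g : ℕ → ℕ), (∀ i ≤ m, g i ≤ k+2) →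
      (∀ i ≤ m, ∀ j ≤ m, g i = g j → i = j) →
      (∀ i, i < m → A (v (g i)) (v (g (i+1)))) → HasPathN A (v (g 0)) (v (g m)) m := by
    intro m g hb hg ha
    exact hasPathN_mk A m (fun i => v (g i))
      (fun i hi j hj h => hg i hi j hj (hva _ (hb i hi) _ (hb j hj) h)) ha
  have hks : ∀ m : ℕ, HasPathN A (v 0) (v (k+2)) m → k + 2 ≤ m := by
    intro m hp
    rw [hv0, hvlast] at hp
    have h1 := ddist_le_of_hasPathN A hp
    rw [hdist] at h1
    exact_mod_cast h1
  have hshort : ∀ (m : ℕ) (g : ℕ → ℕ), g 0 = 0 → g m = k + 2 →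
      (∀ i ≤ m, g i ≤ k+2) → (∀ i ≤ m, ∀ j ≤ m, g i = g j → i = j) →
      (∀ i, i < m → A (v (g i)) (v (g (i+1)))) → k + 2 ≤ m := by
    intro m g h0 hm hb hg ha
    have hp := hpath m g hb hg ha
    rw [h0, hm] at hp
    exact hks m hp
  have hQT : ∀ (g : ℕ → ℕ) (a b : ℕ), g 0 = a → g k = b →
      (∀ i ≤ k, g i ≤ k+2) → (∀ i ≤ k, ∀ j ≤ k, g i = g j → i = j) →
      (∀ i, i < k → A (v (g i)) (v (g (i+1)))) → A (v a) (v b) ∨ A (v b) (v a) := by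
    intro g a b h0 hm hb hg ha
    have hp := hpath k g hb hg ha
    rw [h0, hm] at hp
    exact hqt _ _ hp
  -- no arc from v j (j ≤ k) to v (k+2)
  have hS : ∀ j, j ≤ k → ¬ A (v j) (v (k + 2)) := by
    intro j hj hA
    have hcon := hshort (j+1) (fun i => if i ≤ j then i else k+2)
      (if_pos (Nat.zero_le j)) (if_neg (by omega)) ?_ ?_ ?_
    · omega
    · intro i hi; (try dsimp only); split <;> omega
    · intro a ha b hb h; (try dsimp only at h); split_ifs at h <;> omega
    · intro i hi; (try dsimp only)
      rcases Nat.lt_or_ge i j with h1 | h1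
      · rw [if_pos (by omega), if_pos (by omega)]
        exact hvarc i (by omega)
      · have hij : i = j := by omega
        subst hij
        rw [if_pos le_rfl, if_neg (by omega)]
        exact hA
  -- u_{k+2} → u_2
  have A2 : A (v (k+2)) (v 2) := by
    rcases hQT (fun i => i + 2) 2 (k+2) rfl rfl (by intro i hi; (try dsimp only); omega)
      (by intro a ha b hb h; (try dsimp only at h); omega) (fun i hi => hvarc (i+2) (by omega)) with h | h
    · exact absurd h (hS 2 (by omega))
    · exact h
  -- u_k → u_0
  have Ak0 : A (v k) (v 0) := by
    rcases hQT (fun i => i) 0 k rfl rfl (by intro i hi; (try dsimp only); omega)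
      (by intro a ha b hb h; (try dsimp only at h); omega) (fun i hi => hvarc i (by omega)) with h | h
    · exfalso
      have hcon := hshort 3 (fun i => if i = 0 then 0 else k + (i-1))
        (if_pos rfl) (by (try dsimp only); rw [if_neg (by omega)]) ?_ ?_ ?_
      · omega
      · intro i hi; (try dsimp only); split <;> omega
      · intro a ha b hb hab; (try dsimp only at hab); split_ifs at hab <;> omega
      · intro i hi; interval_cases i <;> norm_num
        · exact h
        · exact hvarc k (by omega)
        · exact hvarc (k+1) (by omega)
    · exact h
  -- u_{k+1} → u_1
  have Ak1 : A (v (k+1)) (v 1) := by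
    rcases hQT (fun i => i + 1) 1 (k+1) rfl rfl (by intro i hi; (try dsimp only); omega)
      (by intro a ha b hb h; (try dsimp only at h); omega) (fun i hi => hvarc (i+1) (by omega)) with h | h
    · exfalso
      have hcon := hshort 3 (fun i => if i ≤ 1 then i else k + (i-1))
        (if_pos (by omega)) (by (try dsimp only); rw [if_neg (by omega)]) ?_ ?_ ?_
      · omega
      · intro i hi; (try dsimp only); split <;> omega
      · intro a ha b hb hab; (try dsimp only at hab); split_ifs at hab <;> omega
      · intro i hi; interval_cases i <;> norm_num
        · exact hvarc 0 (by omega)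
        · exact h
        · exact hvarc (k+1) (by omega)
    · exact h
  -- u_{k+2} → u_0
  have A0 : A (v (k+2)) (v 0) := by
    have harcs0 : ∀ i, i < k → A (v ((fun i => if i = 0 then k+2 else if i = k then 0 else i+1) i)) (v ((fun i => if i = 0 then k+2 else if i = k then 0 else i+1) (i+1))) := by
      intro i hi; dsimp only
      by_cases h0 : i = 0
      · rw [if_pos h0, if_neg (show ¬ i + 1 = 0 by omega), if_neg (show ¬ i + 1 = k by omega),
          show i + 1 + 1 = 2 from by omega]
        exact A2
      · by_cases h1 : i + 1 = k
        · rw [if_neg h0, if_neg (by omega), if_neg (by omega), if_pos h1,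
            show i + 1 = k from h1]
          exact Ak0
        · rw [if_neg h0, if_neg (by omega), if_neg (by omega), if_neg h1]
          exact hvarc (i+1) (by omega)
    rcases hQT (fun i => if i = 0 then k+2 else if i = k then 0 else i+1) (k+2) 0
      (if_pos rfl) (by (try dsimp only); rw [if_neg (by omega), if_pos rfl])
      (by intro i hi; (try dsimp only); split_ifs <;> omega)
      (by intro a ha b hb h; (try dsimp only at h); split_ifs at h <;> omega) harcs0 with h | h
    · exact h
    · exact absurd h (hS 0 (by omega))
  -- u_{k+2} → u_{k-1}
  have Akm1 : A (v (k+2)) (v (k-1)) := by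
    have harcs1 : ∀ i, i < k → A (v ((fun i => if i = 0 then k+2 else i - 1) i)) (v ((fun i => if i = 0 then k+2 else i - 1) (i+1))) := by
      intro i hi; dsimp only
      by_cases h0 : i = 0
      · rw [if_pos h0, if_neg (show ¬ i + 1 = 0 by omega), show i + 1 - 1 = 0 from by omega]
        exact A0
      · rw [if_neg h0, if_neg (by omega), show i + 1 - 1 = (i-1) + 1 from by omega]
        exact hvarc (i-1) (by omega)
    rcases hQT (fun i => if i = 0 then k+2 else i - 1) (k+2) (k-1)
      (if_pos rfl) (by (try dsimp only); rw [if_neg (by omega)])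
      (by intro i hi; (try dsimp only); split_ifs <;> omega)
      (by intro a ha b hb h; (try dsimp only at h); split_ifs at h <;> omega) harcs1 with h | h
    · exact h
    · exact absurd h (hS (k-1) (by omega))
  -- the step: from u_{k+2} → u_{j+2} deduce u_{k+2} → u_j, for 1 ≤ j ≤ k-2
  have hstep : ∀ j, 1 ≤ j → j ≤ k - 2 → A (v (k+2)) (v (j+2)) → A (v (k+2)) (v j) := by
    intro j hj1 hj2 hAj
    have harcs2 : ∀ i, i < k → A (v ((fun i => if i = 0 then k+2 else if i ≤ k - j then j+1+i else i - (k-j)) i)) (v ((fun i => if i = 0 then k+2 else if i ≤ k - j then j+1+i else i - (k-j)) (i+1))) := by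
      intro i hi; dsimp only
      by_cases h0 : i = 0
      · rw [if_pos h0, if_neg (show ¬ i + 1 = 0 by omega), if_pos (show i + 1 ≤ k - j by omega),
          show j + 1 + (i + 1) = j + 2 from by omega]
        exact hAj
      · by_cases h1 : i < k - j
        · rw [if_neg h0, if_pos (by omega), if_neg (by omega), if_pos (by omega)]
          exact hvarc (j+1+i) (by omega)
        · by_cases h2 : i = k - j
          · rw [if_neg h0, if_pos (by omega), if_neg (by omega), if_neg (by omega),
              show j+1+i = k+1 from by omega, show i+1 - (k-j) = 1 from by omega]
            exact Ak1
          · rw [if_neg h0, if_neg (by omega), if_neg (by omega), if_neg (by omega),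
              show i+1 - (k-j) = (i - (k-j)) + 1 from by omega]
            exact hvarc (i - (k-j)) (by omega)
    rcases hQT (fun i => if i = 0 then k+2 else if i ≤ k - j then j+1+i else i - (k-j)) (k+2) j
      (if_pos rfl) (by (try dsimp only); rw [if_neg (by omega), if_neg (by omega)]; omega)
      (by intro i hi; (try dsimp only); split_ifs <;> omega)
      (by intro a ha b hb h; (try dsimp only at h); split_ifs at h <;> omega) harcs2 with h | h
    · exact h
    · exact absurd h (hS j (by omega))
  -- odd chain down from k-1
  have hodd : ∀ t, 2*t ≤ k - 1 → A (v (k+2)) (v (k-1-2*t)) := by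
    intro t
    induction t with
    | zero => intro _; simpa using Akm1
    | succ n ih =>
      intro h
      have h2 := ih (by omega)
      rw [show k-1-2*n = (k-1-2*(n+1)) + 2 from by omega] at h2
      exact hstep _ (by omega) (by omega) h2
  have A1 : A (v (k+2)) (v 1) := by
    have h := hodd (c-1) (by omega)
    rwa [show k-1-2*(c-1) = 1 from by omega] at h
  -- u_{k+2} → u_k
  have Ak : A (v (k+2)) (v k) := by
    have harcs3 : ∀ i, i < k → A (v ((fun i => if i = 0 then k+2 else i) i)) (v ((fun i => if i = 0 then k+2 else i) (i+1))) := by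
      intro i hi; dsimp only
      by_cases h0 : i = 0
      · rw [if_pos h0, if_neg (show ¬ i + 1 = 0 by omega), show i + 1 = 1 from by omega]
        exact A1
      · rw [if_neg h0, if_neg (by omega)]
        exact hvarc i (by omega)
    rcases hQT (fun i => if i = 0 then k+2 else i) (k+2) k
      (if_pos rfl) (by (try dsimp only); rw [if_neg (by omega)])
      (by intro i hi; (try dsimp only); split_ifs <;> omega)
      (by intro a ha b hb h; (try dsimp only at h); split_ifs at h <;> omega) harcs3 with h | h
    · exact h
    · exact absurd h (hS k le_rfl)
  -- even chain down from k
  have heven : ∀ t, 2*t ≤ k - 2 → A (v (k+2)) (v (k-2*t)) := by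
    intro t
    induction t with
    | zero => intro _; simpa using Ak
    | succ n ih =>
      intro h
      have h2 := ih (by omega)
      rw [show k-2*n = (k-2*(n+1)) + 2 from by omega] at h2
      exact hstep _ (by omega) (by omega) h2
  -- conclude
  intro i hi
  have egoal : A (v (k+2)) (v (k-i)) → A (f (Fin.last (k + 2))) (f ⟨k - i, by omega⟩) := by
    intro h
    rwa [hvlast, hvmk (k-i) (by omega)] at h
  apply egoal
  by_cases hj0 : k - i = 0
  · rw [hj0]; exact A0
  · rcases Nat.even_or_odd (k - i) with he | ho
    · obtain ⟨d, hd⟩ := he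
      have h := heven (c-d) (by omega)
      rwa [show k-2*(c-d) = k-i from by omega] at h
    · obtain ⟨d, hd⟩ := ho
      have h := hodd (c-d-1) (by omega)
      rwa [show k-1-2*(c-d-1) = k-i from by omega] at h
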